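/- Let b be a connected locally finite weighted graph over V with values in an ordered field, K ⊆ V finite connected, a ∈ K, and v the solution of the Dirichlet problem for K and a. If x ∈ V satisfies b(x) ≻≻ b(a), then the real part ρ∘v is constant on the irreducible class containing x. -/

import Mathlib

open Classical
open scoped ENNReal

namespace NAG

/-- The real part of an at most finite element of an ordered field:
the supremum of the rationals below it. -/
noncomputable def rp {K : Type*} [Field K] [LinearOrder K] [IsStrictOrderedRing K] (k : K) : ℝ :=
  sSup {r : ℝ | ∃ q : ℚ, r = (q : ℝ) ∧ (q : K) ≤ k}

/-- `k₁ ≃ k₂` : the quotient is bounded above and below by positive rationals. -/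
def Comparable {K : Type*} [Field K] [LinearOrder K] [IsStrictOrderedRing K] (k₁ k₂ : K) : Prop :=
  ∃ c₁ c₂ : ℚ, 0 < c₁ ∧ 0 < c₂ ∧ (c₁ : K) < k₁ / k₂ ∧ k₁ / k₂ < (c₂ : K)

/-- `k₁ ≺≺ k₂` : the quotient is smaller than every positive rational. -/
def MuchLT {K : Type*} [Field K] [LinearOrder K] [IsStrictOrderedRing K] (k₁ k₂ : K) : Prop :=
  ∀ c : ℚ, 0 < c → k₁ / k₂ < (c : K)

/-- `k₁ ≾ k₂` : the quotient is bounded above by some positive rational. -/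
def LessSim {K : Type*} [Field K] [LinearOrder K] [IsStrictOrderedRing K] (k₁ k₂ : K) : Prop :=
  ∃ c : ℚ, 0 < c ∧ k₁ / k₂ < (c : K)

/-- A (locally finite) weighted graph over `V` with values in an ordered field `K`. -/
structure Graph (V K : Type*) [Field K] [LinearOrder K] [IsStrictOrderedRing K] where
  w : V → V → K
  symm : ∀ x y, w x y = w y x
  nonneg : ∀ x y, 0 ≤ w x y
  loopless : ∀ x, w x x = 0
  locFin : ∀ x, {y | w x y ≠ 0}.Finite

variable {V K : Type*} [Field K] [LinearOrder K] [IsStrictOrderedRing K]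

/-- `b(x) = Σ_y b(x,y)`. -/
noncomputable def Graph.deg (G : Graph V K) (x : V) : K := ∑ᶠ y, G.w x y

def Graph.Adj (G : Graph V K) (x y : V) : Prop := 0 < G.w x y

def Graph.Connected (G : Graph V K) : Prop :=
  ∀ x y : V, ∃ (n : ℕ) (p : ℕ → V), p 0 = x ∧ p n = y ∧ ∀ i < n, G.Adj (p i) (p (i + 1))

def Graph.ConnectedOn (G : Graph V K) (S : Set V) : Prop :=
  ∀ x ∈ S, ∀ y ∈ S, ∃ (n : ℕ) (p : ℕ → V),
    p 0 = x ∧ p n = y ∧ (∀ i ≤ n, p i ∈ S) ∧ ∀ i < n, G.Adj (p i) (p (i + 1))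

/-- normalized weight `p(x,y) = b(x,y)/b(x)`. -/
noncomputable def Graph.p (G : Graph V K) (x y : V) : K := G.w x y / G.deg x

/-- The real transition matrix `π_U^b`. -/
noncomputable def Graph.pi (G : Graph V K) (U : Set V) (x y : V) : ℝ :=
  if x ∈ U then rp (G.p x y) else if x = y then 1 else 0

/-- A directed path of length `n` from `x` to `y` for a real kernel `m`. -/
def DirPath {V : Type*} (m : V → V → ℝ) (x y : V) (n : ℕ) (p : ℕ → V) : Prop :=
  p 0 = x ∧ p n = y ∧ ∀ i < n, 0 < m (p i) (p (i + 1))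

/-- `x → y` : reachability by directed paths. -/
def Reaches {V : Type*} (m : V → V → ℝ) (x y : V) : Prop :=
  x = y ∨ ∃ n p, DirPath m x y n p

/-- `x ↔ y` : mutual reachability (same strongly connected component). -/
def SameSCC {V : Type*} (m : V → V → ℝ) (x y : V) : Prop :=
  Reaches m x y ∧ Reaches m y x

/-- The Laplacian `Δf(x) = (1/b(x)) Σ_y b(x,y)(f(x) − f(y))`. -/
noncomputable def Graph.lap (G : Graph V K) (f : V → K) (x : V) : K :=
  (∑ᶠ y, G.w x y * (f x - f y)) / G.deg x

/-- `v` solves the Dirichlet problem for the finite set `S` and `a ∈ S`. -/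
def Graph.IsDirichletSol (G : Graph V K) (S : Finset V) (a : V) (v : V → K) : Prop :=
  v a = 1 ∧ (∀ x ∈ S, x ≠ a → G.lap v x = 0) ∧ ∀ x ∉ S, v x = 0

section Aux

variable {V K : Type*} [Field K] [LinearOrder K] [IsStrictOrderedRing K]

lemma Graph.finsum_eq_sum_nbr (G : Graph V K) (x : V) (g : V → K)
    (hg : ∀ y, G.w x y = 0 → g y = 0) (T : Finset V)
    (hT : ∀ y, G.w x y ≠ 0 → y ∈ T) :
    ∑ᶠ y, g y = ∑ y ∈ T, g y := by
  refine finsum_eq_sum_of_support_subset _ ?_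
  intro y hy
  have hw : G.w x y ≠ 0 := fun h => hy (hg y h)
  exact hT y hw

lemma Graph.deg_eq_sum (G : Graph V K) (x : V) (T : Finset V)
    (hT : ∀ y, G.w x y ≠ 0 → y ∈ T) :
    G.deg x = ∑ y ∈ T, G.w x y :=
  G.finsum_eq_sum_nbr x _ (fun _ h => h) T hT

lemma Graph.w_le_deg (G : Graph V K) (x y : V) : G.w x y ≤ G.deg x := by
  rw [G.deg_eq_sum x (G.locFin x).toFinset (fun z hz => (G.locFin x).mem_toFinset.2 hz)]
  by_cases h : G.w x y = 0
  · rw [h]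
    exact Finset.sum_nonneg fun z _ => G.nonneg x z
  · exact Finset.single_le_sum (fun z _ => G.nonneg x z) ((G.locFin x).mem_toFinset.2 h)

lemma rp_nonempty {k : K} (hk : 0 ≤ k) :
    Set.Nonempty {r : ℝ | ∃ q : ℚ, r = (q : ℝ) ∧ (q : K) ≤ k} :=
  ⟨0, 0, by norm_num, by exact_mod_cast hk⟩

lemma rp_bddAbove {k : K} (hk : k ≤ 1) :
    BddAbove {r : ℝ | ∃ q : ℚ, r = (q : ℝ) ∧ (q : K) ≤ k} := by
  refine ⟨1, ?_⟩
  rintro r ⟨q, rfl, hq⟩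
  have h1 : (q : K) ≤ 1 := hq.trans hk
  have hq1 : q ≤ 1 := by exact_mod_cast h1
  exact_mod_cast hq1

lemma rp_le_rp {k₁ k₂ : K} (h1 : 0 ≤ k₁) (h2' : k₂ ≤ 1)
    (h : ∀ ε : ℚ, 0 < ε → k₁ ≤ k₂ + ε) : rp k₁ ≤ rp k₂ := by
  unfold rp
  refine csSup_le (rp_nonempty h1) ?_
  rintro r ⟨q, rfl, hq⟩
  by_contra hcon
  push_neg at hcon
  obtain ⟨ε, hε0, hε⟩ := exists_rat_btwn (sub_pos.2 hcon)
  have hε0' : (0:ℚ) < ε := by exact_mod_cast hε0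
  have hmem : ((q - ε : ℚ) : ℝ) ∈ {r : ℝ | ∃ q : ℚ, r = (q : ℝ) ∧ (q : K) ≤ k₂} := by
    refine ⟨q - ε, rfl, ?_⟩
    have h3 := h ε hε0'
    have h4 : (q : K) ≤ k₂ + (ε : ℚ) := hq.trans h3
    push_cast
    linarith
  have h5 := le_csSup (rp_bddAbove h2') hmem
  push_cast at h5 hε
  linarith

lemma rp_eq_rp {k₁ k₂ : K} (h1 : 0 ≤ k₁) (h1' : k₁ ≤ 1) (h2 : 0 ≤ k₂) (h2' : k₂ ≤ 1)
    (h : ∀ ε : ℚ, 0 < ε → k₁ ≤ k₂ + ε ∧ k₂ ≤ k₁ + ε) : rp k₁ = rp k₂ :=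
  le_antisymm (rp_le_rp h1 h2' fun ε hε => (h ε hε).1)
    (rp_le_rp h2 h1' fun ε hε => (h ε hε).2)

lemma exists_rat_le_of_rp_pos {k : K} (h : 0 < rp k) : ∃ q : ℚ, 0 < q ∧ (q : K) ≤ k := by
  unfold rp at h
  have hne : Set.Nonempty {r : ℝ | ∃ q : ℚ, r = (q : ℝ) ∧ (q : K) ≤ k} := by
    by_contra hc
    rw [Set.not_nonempty_iff_eq_empty] at hc
    rw [hc, Real.sSup_empty] at h
    exact lt_irrefl _ h
  obtain ⟨r, hrA, hr⟩ := exists_lt_of_lt_csSup hne h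
  obtain ⟨q, rfl, hq⟩ := hrA
  exact ⟨q, by exact_mod_cast hr, hq⟩

lemma bound_above (G : Graph V K) (S : Finset V)
    (hS : G.ConnectedOn ↑S) (a : V) (ha : a ∈ S) (v : V → K) (c : K)
    (hva : v a ≤ c) (hc : 0 ≤ c)
    (hlap : ∀ x ∈ S, x ≠ a → (∑ᶠ y, G.w x y * (v x - v y)) = 0)
    (hout : ∀ x ∉ S, v x = 0) : ∀ x, v x ≤ c := by
  have hSne : S.Nonempty := ⟨a, ha⟩
  set M := S.sup' hSne v with hM
  by_cases hMc : M ≤ c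
  · intro x
    by_cases hxS : x ∈ S
    · exact (Finset.le_sup' v hxS).trans hMc
    · rw [hout x hxS]; exact hc
  push_neg at hMc
  exfalso
  have hvleM : ∀ y, v y ≤ M := by
    intro y
    by_cases hyS : y ∈ S
    · exact Finset.le_sup' v hyS
    · rw [hout y hyS]; exact hc.trans hMc.le
  have claim : ∀ x ∈ S, x ≠ a → v x = M → ∀ y, G.w x y ≠ 0 → v y = M := by
    intro x hxS hxa hvx y hwy
    have h0 := hlap x hxS hxa
    have hsum : ∑ z ∈ (G.locFin x).toFinset, G.w x z * (v x - v z) = 0 := by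
      rw [← G.finsum_eq_sum_nbr x _ (fun z hz => by rw [hz, zero_mul]) _
        (fun z hz => (G.locFin x).mem_toFinset.2 hz)]
      exact h0
    have hnn : ∀ z ∈ (G.locFin x).toFinset, 0 ≤ G.w x z * (v x - v z) := by
      intro z _
      have := hvleM z
      exact mul_nonneg (G.nonneg x z) (by rw [hvx]; linarith)
    have hz0 := (Finset.sum_eq_zero_iff_of_nonneg hnn).1 hsum y
      ((G.locFin x).mem_toFinset.2 hwy)
    rcases mul_eq_zero.1 hz0 with h | h
    · exact absurd h hwy
    · have hxy : v x = v y := sub_eq_zero.1 h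
      rw [← hxy]; exact hvx
  obtain ⟨x₀, hx₀S, hx₀⟩ := Finset.exists_mem_eq_sup' hSne v
  obtain ⟨n, p, hp0, hpn, hpS, hadj⟩ := hS x₀ hx₀S a ha
  have key : ∀ i, i ≤ n → v (p i) = M := by
    intro i
    induction i with
    | zero =>
      intro _
      rw [hp0, hM]
      exact hx₀.symm
    | succ i ih =>
      intro hin
      have hi : i ≤ n := Nat.le_of_succ_le hin
      have hvi := ih hi
      have hiS : p i ∈ S := hpS i hi
      have hia : p i ≠ a := by
        intro hcon
        rw [hcon] at hvi
        rw [hvi] at hva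
        linarith
      have hadji : 0 < G.w (p i) (p (i + 1)) := hadj i (Nat.lt_of_succ_le hin)
      exact claim (p i) hiS hia hvi (p (i + 1)) (ne_of_gt hadji)
  have hend := key n le_rfl
  rw [hpn] at hend
  rw [hend] at hva
  linarith

lemma lap_num_zero (G : Graph V K) (hdeg : ∀ x, 0 < G.deg x) {v : V → K} {x : V}
    (h : G.lap v x = 0) : (∑ᶠ y, G.w x y * (v x - v y)) = 0 := by
  rw [Graph.lap, div_eq_zero_iff] at h
  rcases h with h | h
  · exact h
  · exact absurd h (ne_of_gt (hdeg x))

lemma dirichlet_mem_Icc (G : Graph V K) (hdeg : ∀ x, 0 < G.deg x) (S : Finset V)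
    (hS : G.ConnectedOn ↑S) (a : V) (ha : a ∈ S) (v : V → K)
    (hv : G.IsDirichletSol S a v) : ∀ x, 0 ≤ v x ∧ v x ≤ 1 := by
  obtain ⟨hva, hlap, hout⟩ := hv
  have hlap' : ∀ x ∈ S, x ≠ a → (∑ᶠ y, G.w x y * (v x - v y)) = 0 :=
    fun x hxS hxa => lap_num_zero G hdeg (hlap x hxS hxa)
  have hub : ∀ x, v x ≤ 1 :=
    bound_above G S hS a ha v 1 hva.le zero_le_one hlap' hout
  have hlb : ∀ x, -v x ≤ 0 := by
    refine bound_above G S hS a ha (fun y => -v y) 0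
      (by show -v a ≤ 0; rw [hva]; norm_num) le_rfl ?_
      (fun x hxS => by show -v x = 0; rw [hout x hxS, neg_zero])
    intro x hxS hxa
    have h0 := hlap' x hxS hxa
    have e1 : (∑ᶠ y, G.w x y * ((fun y => -v y) x - (fun y => -v y) y))
        = ∑ y ∈ (G.locFin x).toFinset, G.w x y * (-v x - -v y) :=
      G.finsum_eq_sum_nbr x _ (fun z hz => by simp [hz]) _
        (fun z hz => (G.locFin x).mem_toFinset.2 hz)
    have e2 : (∑ᶠ y, G.w x y * (v x - v y))
        = ∑ y ∈ (G.locFin x).toFinset, G.w x y * (v x - v y) :=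
      G.finsum_eq_sum_nbr x _ (fun z hz => by rw [hz, zero_mul]) _
        (fun z hz => (G.locFin x).mem_toFinset.2 hz)
    rw [e1]
    have e3 : ∑ y ∈ (G.locFin x).toFinset, G.w x y * (-v x - -v y)
        = ∑ y ∈ (G.locFin x).toFinset, -(G.w x y * (v x - v y)) :=
      Finset.sum_congr rfl fun z _ => by ring
    rw [e3, Finset.sum_neg_distrib, ← e2, h0, neg_zero]
  exact fun x => ⟨by have := hlb x; linarith, hub x⟩

lemma edge_energy (G : Graph V K) (hdeg : ∀ x, 0 < G.deg x) (S : Finset V)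
    (a : V) (ha : a ∈ S) (v : V → K) (hv : G.IsDirichletSol S a v)
    (hv01 : ∀ x, 0 ≤ v x ∧ v x ≤ 1)
    (x y : V) (hxS : x ∈ S) :
    G.w x y * (v x - v y) ^ 2 ≤ 2 * G.deg a := by
  obtain ⟨hva, hlap, hout⟩ := hv
  set T : Finset V := S ∪ S.biUnion (fun s => (G.locFin s).toFinset) with hTdef
  have hT1 : S ⊆ T := Finset.subset_union_left
  have hT2 : ∀ s ∈ S, ∀ z, G.w s z ≠ 0 → z ∈ T := by
    intro s hs z hz
    exact Finset.mem_union_right _ (Finset.mem_biUnion.2 ⟨s, hs, (G.locFin s).mem_toFinset.2 hz⟩)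
  by_cases hwxy : G.w x y = 0
  · rw [hwxy, zero_mul]
    have := hdeg a
    linarith
  have hxT : x ∈ T := hT1 hxS
  have hyT : y ∈ T := hT2 x hxS y hwxy
  set L : V → K := fun s => ∑ z ∈ T, G.w s z * (v s - v z) with hLdef
  have hL0 : ∀ s ∈ S, s ≠ a → L s = 0 := by
    intro s hsS hsa
    have h0 := lap_num_zero G hdeg (hlap s hsS hsa)
    rw [hLdef]
    simp only
    rw [← G.finsum_eq_sum_nbr s _ (fun z hz => by rw [hz, zero_mul]) T (hT2 s hsS)]
    exact h0
  have hLa : L a ≤ G.deg a := by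
    have h1 : L a ≤ ∑ z ∈ T, G.w a z * 1 := by
      refine Finset.sum_le_sum fun z _ => ?_
      have h2 := (hv01 z).1
      exact mul_le_mul_of_nonneg_left (by rw [hva]; linarith) (G.nonneg a z)
    have h3 : ∑ z ∈ T, G.w a z * 1 = G.deg a := by
      simp only [mul_one]
      exact (G.deg_eq_sum a T (hT2 a ha)).symm
    rw [h3] at h1
    exact h1
  set A : K := ∑ s ∈ T, ∑ z ∈ T, G.w s z * (v s - v z) * v s with hAdef
  set B : K := ∑ s ∈ T, ∑ z ∈ T, G.w s z * (v s - v z) * v z with hBdef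
  set E : K := ∑ s ∈ T, ∑ z ∈ T, G.w s z * (v s - v z) ^ 2 with hEdef
  have h1 : E = A - B := by
    rw [hEdef, hAdef, hBdef, ← Finset.sum_sub_distrib]
    refine Finset.sum_congr rfl fun s _ => ?_
    rw [← Finset.sum_sub_distrib]
    exact Finset.sum_congr rfl fun z _ => by ring
  have h2 : B = -A := by
    have hc : B = ∑ s ∈ T, ∑ z ∈ T, -(G.w s z * (v s - v z) * v s) := by
      rw [hBdef, Finset.sum_comm]
      refine Finset.sum_congr rfl fun s _ => Finset.sum_congr rfl fun z _ => ?_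
      rw [G.symm z s]
      ring
    rw [hc, hAdef]
    simp [Finset.sum_neg_distrib]
  have h3 : A = ∑ s ∈ T, v s * L s := by
    rw [hAdef, hLdef]
    refine Finset.sum_congr rfl fun s _ => ?_
    rw [Finset.mul_sum]
    exact Finset.sum_congr rfl fun z _ => by ring
  have h4 : ∑ s ∈ T, v s * L s = v a * L a := by
    refine Finset.sum_eq_single a ?_ ?_
    · intro s hsT hsa
      by_cases hsS : s ∈ S
      · rw [hL0 s hsS hsa, mul_zero]
      · rw [hout s hsS, zero_mul]
    · intro haT
      exact absurd (hT1 ha) haT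
  have hE : E ≤ 2 * G.deg a := by
    have hva1 : v a * L a = L a := by rw [hva, one_mul]
    have : E = 2 * L a := by rw [h1, h2, h3, h4, hva1]; ring
    rw [this]
    linarith
  have hterm : G.w x y * (v x - v y) ^ 2 ≤ E := by
    have hnn : ∀ s ∈ T, ∀ z ∈ T, 0 ≤ G.w s z * (v s - v z) ^ 2 :=
      fun s _ z _ => mul_nonneg (G.nonneg s z) (sq_nonneg _)
    have h5 : G.w x y * (v x - v y) ^ 2 ≤ ∑ z ∈ T, G.w x z * (v x - v z) ^ 2 :=
      Finset.single_le_sum (fun z hz => hnn x hxT z hz) hyT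
    have h6 : ∑ z ∈ T, G.w x z * (v x - v z) ^ 2 ≤ E := by
      rw [hEdef]
      exact Finset.single_le_sum
        (fun s hs => Finset.sum_nonneg fun z hz => hnn s hs z hz) hxT
    exact h5.trans h6
  exact hterm.trans hE

lemma step_analysis (G : Graph V K) (S : Finset V) {x y : V}
    (h : 0 < G.pi ↑S x y) :
    (x ∈ S ∧ 0 < rp (G.p x y)) ∨ (x ∉ S ∧ x = y) := by
  rw [Graph.pi] at h
  split_ifs at h with h1 h2
  · exact Or.inl ⟨by exact_mod_cast h1, h⟩
  · exact Or.inr ⟨by simpa using h1, h2⟩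
  · norm_num at h

lemma step_rp (G : Graph V K) (hdeg : ∀ x, 0 < G.deg x) (S : Finset V)
    (a : V) (ha : a ∈ S) (v : V → K) (hv : G.IsDirichletSol S a v)
    (hv01 : ∀ x, 0 ≤ v x ∧ v x ≤ 1)
    {x y : V} (hml : MuchLT (G.deg a) (G.deg x)) (h : 0 < G.pi ↑S x y) :
    MuchLT (G.deg a) (G.deg y) ∧ rp (v x) = rp (v y) := by
  rcases step_analysis G S h with ⟨hxS, hrp⟩ | ⟨_, rfl⟩
  · obtain ⟨q, hq0, hq⟩ := exists_rat_le_of_rp_pos hrp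
    rw [Graph.p] at hq
    have hw : (q : K) * G.deg x ≤ G.w x y := (le_div_iff₀ (hdeg x)).1 hq
    have hq0K : (0 : K) < (q : ℚ) := by exact_mod_cast hq0
    have hwpos : 0 < G.w x y := lt_of_lt_of_le (mul_pos hq0K (hdeg x)) hw
    have hdy : (q : K) * G.deg x ≤ G.deg y := by
      calc (q : K) * G.deg x ≤ G.w x y := hw
        _ = G.w y x := G.symm x y
        _ ≤ G.deg y := G.w_le_deg y x
    have hml' : MuchLT (G.deg a) (G.deg y) := by
      intro c hc
      have h1 := hml (q * c) (mul_pos hq0 hc)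
      have hcK : (0 : K) < (c : ℚ) := by exact_mod_cast hc
      rw [div_lt_iff₀ (hdeg x)] at h1
      push_cast at h1
      rw [div_lt_iff₀ (hdeg y)]
      have h2 : (c : K) * ((q : K) * G.deg x) ≤ (c : K) * G.deg y :=
        mul_le_mul_of_nonneg_left hdy hcK.le
      nlinarith
    refine ⟨hml', ?_⟩
    have henergy := edge_energy G hdeg S a ha v hv hv01 x y hxS
    refine rp_eq_rp (hv01 x).1 (hv01 x).2 (hv01 y).1 (hv01 y).2 ?_
    intro ε hε
    have hεK : (0 : K) < (ε : ℚ) := by exact_mod_cast hε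
    have hc2 : (0 : ℚ) < q * ε ^ 2 / 2 := by positivity
    have h1 := hml _ hc2
    rw [div_lt_iff₀ (hdeg x)] at h1
    push_cast at h1
    have hmul : (ε : K) ^ 2 * ((q : K) * G.deg x) ≤ (ε : K) ^ 2 * G.w x y :=
      mul_le_mul_of_nonneg_left hw (sq_nonneg _)
    have hd2 : (v x - v y) ^ 2 < (ε : K) ^ 2 := by
      nlinarith
    constructor
    · nlinarith [sq_nonneg (v x - v y + (ε : K))]
    · nlinarith [sq_nonneg (v x - v y - (ε : K))]
  · exact ⟨hml, rfl⟩

lemma reaches_rp (G : Graph V K) (hdeg : ∀ x, 0 < G.deg x) (S : Finset V)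
    (a : V) (ha : a ∈ S) (v : V → K) (hv : G.IsDirichletSol S a v)
    (hv01 : ∀ x, 0 ≤ v x ∧ v x ≤ 1)
    {x y : V} (hml : MuchLT (G.deg a) (G.deg x))
    (h : Reaches (G.pi ↑S) x y) : rp (v x) = rp (v y) := by
  rcases h with rfl | ⟨n, p, hp0, hpn, hstep⟩
  · rfl
  · have key : ∀ i, i ≤ n → MuchLT (G.deg a) (G.deg (p i)) ∧ rp (v (p 0)) = rp (v (p i)) := by
      intro i
      induction i with
      | zero => exact fun _ => ⟨by rw [hp0]; exact hml, rfl⟩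
      | succ i ih =>
        intro hin
        obtain ⟨h1, h2⟩ := ih (Nat.le_of_succ_le hin)
        obtain ⟨h3, h4⟩ := step_rp G hdeg S a ha v hv hv01 h1
          (hstep i (Nat.lt_of_succ_le hin))
        exact ⟨h3, h2.trans h4⟩
    have hfin := (key n le_rfl).2
    rw [hp0, hpn] at hfin
    exact hfin

end Aux

/-- if `v` solves the Dirichlet problem for finite connected `K`
and `a ∈ K`, and `b(x) ≻≻ b(a)`, then `ρ ∘ v` is constant on the irreducible
class containing `x`. -/
theorem realPart_constant_on_class {V K : Type*} [Field K] [LinearOrder K] [IsStrictOrderedRing K] [Countable V]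
    (G : Graph V K) (hconn : G.Connected) (hdeg : ∀ x, 0 < G.deg x)
    (S : Finset V) (hS : G.ConnectedOn ↑S) (a : V) (ha : a ∈ S)
    (v : V → K) (hv : G.IsDirichletSol S a v)
    (x : V) (hx : MuchLT (G.deg a) (G.deg x)) :
    ∀ y z : V, SameSCC (G.pi ↑S) x y → SameSCC (G.pi ↑S) x z →
      rp (v y) = rp (v z) := by
  intro y z hy hz
  have hv01 := dirichlet_mem_Icc G hdeg S hS a ha v hv
  have h1 := reaches_rp G hdeg S a ha v hv hv01 hx hy.1
  have h2 := reaches_rp G hdeg S a ha v hv hv01 hx hz.1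
  rw [← h1, ← h2]

end NAG
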